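/- For all X, Y, Z ∈ V one has g(G(X,Y),JZ) + g(G(X,Z),JY) = 0. -/
import Mathlib
set_option maxHeartbeats 2000000


open Matrix

/-- The indefinite inner product `⟨a,b⟩ = -(1/2)·Trace(adj(a)·b)` on 2×2 real matrices. -/
noncomputable def ip (a b : Matrix (Fin 2) (Fin 2) ℝ) : ℝ :=
  -(1/2 : ℝ) * (a.adjugate * b).trace

/-- The product metric `⟨(α,β),(γ,δ)⟩_E = ⟨α,γ⟩ + ⟨β,δ⟩`. -/
noncomputable def ipE (X Y : Matrix (Fin 2) (Fin 2) ℝ × Matrix (Fin 2) (Fin 2) ℝ) : ℝ :=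
  ip X.1 Y.1 + ip X.2 Y.2

/-- The nearly Kähler metric `g`. -/
noncomputable def g (X Y : Matrix (Fin 2) (Fin 2) ℝ × Matrix (Fin 2) (Fin 2) ℝ) : ℝ :=
  (2/3 : ℝ) * ipE X Y - (1/3 : ℝ) * ipE (X.2, X.1) Y

/-- The almost complex structure `J(α,β) = (1/√3)·(α − 2β, 2α − β)`. -/
noncomputable def Jmap (X : Matrix (Fin 2) (Fin 2) ℝ × Matrix (Fin 2) (Fin 2) ℝ) :
    Matrix (Fin 2) (Fin 2) ℝ × Matrix (Fin 2) (Fin 2) ℝ :=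
  (Real.sqrt 3)⁻¹ • (X.1 - (2:ℝ) • X.2, (2:ℝ) • X.1 - X.2)

/-- The almost product structure `P(α,β) = (β,α)`. -/
def Pmap (X : Matrix (Fin 2) (Fin 2) ℝ × Matrix (Fin 2) (Fin 2) ℝ) :
    Matrix (Fin 2) (Fin 2) ℝ × Matrix (Fin 2) (Fin 2) ℝ :=
  (X.2, X.1)

/-- The cross product `α×β = (1/2)(αβ − βα)` on `sl(2,ℝ)`. -/
noncomputable def cross (a b : Matrix (Fin 2) (Fin 2) ℝ) : Matrix (Fin 2) (Fin 2) ℝ :=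
  (1/2 : ℝ) • (a * b - b * a)

/-- The tensor `G`. -/
noncomputable def Gmap (X Y : Matrix (Fin 2) (Fin 2) ℝ × Matrix (Fin 2) (Fin 2) ℝ) :
    Matrix (Fin 2) (Fin 2) ℝ × Matrix (Fin 2) (Fin 2) ℝ :=
  (2 / (3 * Real.sqrt 3)) •
    (-(cross X.1 Y.1) - cross X.1 Y.2 + cross Y.1 X.2 + (2:ℝ) • cross X.2 Y.2,
     -((2:ℝ) • cross X.1 Y.1) + cross X.1 Y.2 - cross Y.1 X.2 + cross X.2 Y.2)

/-- `g(G(X,Y),JZ) + g(G(X,Z),JY) = 0` on `V = sl(2,ℝ) × sl(2,ℝ)`. -/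
theorem stmt_10 (X Y Z : Matrix (Fin 2) (Fin 2) ℝ × Matrix (Fin 2) (Fin 2) ℝ)
    (hX1 : X.1.trace = 0) (hX2 : X.2.trace = 0)
    (hY1 : Y.1.trace = 0) (hY2 : Y.2.trace = 0)
    (hZ1 : Z.1.trace = 0) (hZ2 : Z.2.trace = 0) :
    g (Gmap X Y) (Jmap Z) + g (Gmap X Z) (Jmap Y) = 0 := by
  obtain ⟨a, b⟩ := X; obtain ⟨c, d⟩ := Y; obtain ⟨e, f⟩ := Z
  simp only [Matrix.trace_fin_two] at hX1 hX2 hY1 hY2 hZ1 hZ2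
  simp only [g, ipE, ip, Gmap, Jmap, cross, Matrix.trace_fin_two,
    Matrix.adjugate_fin_two, Matrix.mul_apply, Fin.sum_univ_two,
    Matrix.smul_apply, Matrix.add_apply, Matrix.sub_apply, Matrix.neg_apply,
    Matrix.of_apply, Matrix.cons_val', Matrix.cons_val_zero, Matrix.cons_val_one,
    Matrix.head_cons, Matrix.head_fin_const, Matrix.empty_val',
    Matrix.cons_val_fin_one, smul_eq_mul, Prod.smul_fst, Prod.smul_snd, Prod.fst, Prod.snd, nsmul_eq_mul, Nat.cast_ofNat]
  rw [show a 1 1 = -a 0 0 from by linarith, show b 1 1 = -b 0 0 from by linarith,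
    show c 1 1 = -c 0 0 from by linarith, show d 1 1 = -d 0 0 from by linarith,
    show e 1 1 = -e 0 0 from by linarith, show f 1 1 = -f 0 0 from by linarith]
  have h3 : Real.sqrt 3 ≠ 0 := by positivity
  field_simp
  ring
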